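/- arXiv:2109.10846 — 5 statements merged into one kernel-verified Lean document; each statement's English description precedes it below -/
import Mathlib

section
/- Let T have the wandering subspace property and let w be a bounded point evaluation for T, with E_w : H → ker T* the continuous extension of the evaluation map p(T) ↦ p(w). Then E_w*(ker T*) = ker(T* − w̄), and E_w* : ker T* → ker(T* − w̄) is a bijective bounded operator with bounded inverse. -/
open ContinuousLinearMap Submodule Filter

noncomputable section

variable {H : Type*} [NormedAddCommGroup H] [InnerProductSpace ℂ H] [CompleteSpace H]

/-- The wandering subspace `ker T*`. -/
def kerAdj (T : H →L[ℂ] H) : Submodule ℂ H := LinearMap.ker (ContinuousLinearMap.adjoint T : H →ₗ[ℂ] H)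

/-- `T` has the wandering subspace property: the closed linear span of
`⋃ₙ Tⁿ(ker T*)` is all of `H`. -/
def WSP (T : H →L[ℂ] H) : Prop :=
  (⨆ n : ℕ, (kerAdj T).map ((T ^ n : H →L[ℂ] H) : H →ₗ[ℂ] H)).topologicalClosure = ⊤

/-- `w` is a bounded point evaluation for `T`: `‖p(w)‖ ≤ c ‖p(T)‖` for all
`ker T*`-valued polynomials `p`, where `p(T) = Σ Tⁿ xₙ` for `p(z) = Σ xₙ zⁿ`. -/
def IsBPE (T : H →L[ℂ] H) (w : ℂ) : Prop :=
  ∃ c > (0 : ℝ), ∀ (k : ℕ) (x : ℕ → H), (∀ n, x n ∈ kerAdj T) →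
    ‖∑ n ∈ Finset.range (k + 1), w ^ n • x n‖ ≤
      c * ‖∑ n ∈ Finset.range (k + 1), (T ^ n) (x n)‖

/-- `E` is the (continuous extension of the) evaluation operator at `w`:
it takes values in `ker T*` and sends `p(T)` to `p(w)`. -/
def IsEval (T : H →L[ℂ] H) (w : ℂ) (E : H →L[ℂ] H) : Prop :=
  (∀ y, E y ∈ kerAdj T) ∧
    ∀ (k : ℕ) (x : ℕ → H), (∀ n, x n ∈ kerAdj T) →
      E (∑ n ∈ Finset.range (k + 1), (T ^ n) (x n)) =
        ∑ n ∈ Finset.range (k + 1), w ^ n • x n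

/-- `E` evaluates a one-term polynomial. -/
lemma eval_pow (T : H →L[ℂ] H) (w : ℂ) (E : H →L[ℂ] H) (hE : IsEval T w E)
    (n : ℕ) (x : H) (hx : x ∈ kerAdj T) : E ((T ^ n) x) = w ^ n • x := by
  have h := hE.2 n (fun m => if m = n then x else 0) (by
    intro m; by_cases h : m = n <;> simp [h, hx, Submodule.zero_mem])
  have hL : ∑ m ∈ Finset.range (n + 1), (T ^ m) (if m = n then x else 0) = (T ^ n) x := by
    rw [Finset.sum_eq_single n]
    · simp
    · intro m _ hm; simp [hm]
    · intro hn; exact absurd (Finset.self_mem_range_succ n) hn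
  have hR : ∑ m ∈ Finset.range (n + 1), w ^ m • (if m = n then x else 0) = w ^ n • x := by
    rw [Finset.sum_eq_single n]
    · simp
    · intro m _ hm; simp [hm]
    · intro hn; exact absurd (Finset.self_mem_range_succ n) hn
  rw [hL, hR] at h
  exact h

/-- A continuous linear map vanishing on all `Tⁿ(ker T*)` is zero, by WSP. -/
lemma dense_ext {F : Type*} [NormedAddCommGroup F] [NormedSpace ℂ F]
    (T : H →L[ℂ] H) (hT : WSP T) (f : H →L[ℂ] F)
    (hf : ∀ (n : ℕ) (x : H), x ∈ kerAdj T → f ((T ^ n) x) = 0) : f = 0 := by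
  have hker : (⨆ n : ℕ, (kerAdj T).map ((T ^ n : H →L[ℂ] H) : H →ₗ[ℂ] H)) ≤ LinearMap.ker (f : H →ₗ[ℂ] F) := by
    refine iSup_le fun n => ?_
    rintro _ ⟨x, hx, rfl⟩
    exact hf n x hx
  have hle : (⨆ n : ℕ, (kerAdj T).map ((T ^ n : H →L[ℂ] H) : H →ₗ[ℂ] H)).topologicalClosure ≤ LinearMap.ker (f : H →ₗ[ℂ] F) :=
    Submodule.topologicalClosure_minimal _ hker (ContinuousLinearMap.isClosed_ker f)
  rw [hT] at hle
  ext x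
  simpa using hle (Submodule.mem_top (x := x))

/-- `E_w*(ker T*) = ker(T* - w̄)` and `E_w* : ker T* → ker(T* - w̄)` is
bijective with bounded inverse. -/
theorem stmt_3 [TopologicalSpace.SeparableSpace H] (T : H →L[ℂ] H) (hT : WSP T)
    (w : ℂ) (hw : IsBPE T w) (E : H →L[ℂ] H) (hE : IsEval T w E) :
    (kerAdj T).map (ContinuousLinearMap.adjoint E : H →ₗ[ℂ] H) =
      LinearMap.ker ((ContinuousLinearMap.adjoint T - (starRingEnd ℂ w) • (1 : H →L[ℂ] H) : H →L[ℂ] H) : H →ₗ[ℂ] H) ∧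
    ∃ c > (0 : ℝ), ∀ x ∈ kerAdj T, ‖x‖ ≤ c * ‖ContinuousLinearMap.adjoint E x‖ := by
  have hEid : ∀ x ∈ kerAdj T, E x = x := by
    intro x hx
    simpa using eval_pow T w E hE 0 x hx
  -- E ∘ T = w • E, by density
  have hcomp : E ∘L T = w • E := by
    have h0 := dense_ext T hT (E ∘L T - w • E) (fun n x hx => by
      have h1 : (T ^ (n + 1)) x = T ((T ^ n) x) := by
        rw [pow_succ']; rfl
      have h2 := eval_pow T w E hE (n + 1) x hx
      rw [h1] at h2
      simp only [ContinuousLinearMap.sub_apply, ContinuousLinearMap.comp_apply,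
        ContinuousLinearMap.smul_apply, eval_pow T w E hE n x hx, h2, pow_succ', mul_smul,
        sub_self])
    exact sub_eq_zero.mp h0
  -- hence T* E* = w̄ E*
  have hadj : ∀ z : H, ContinuousLinearMap.adjoint T (ContinuousLinearMap.adjoint E z) =
      (starRingEnd ℂ w) • ContinuousLinearMap.adjoint E z := by
    intro z
    have h1 : ContinuousLinearMap.adjoint (E ∘L T) = ContinuousLinearMap.adjoint (w • E) := by
      rw [hcomp]
    rw [ContinuousLinearMap.adjoint_comp] at h1
    have h2 : ContinuousLinearMap.adjoint (w • E) =
        (starRingEnd ℂ w) • ContinuousLinearMap.adjoint E := by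
      rw [← ContinuousLinearMap.star_eq_adjoint, ← ContinuousLinearMap.star_eq_adjoint,
        star_smul]
      rfl
    have := congrArg (fun f => f z) (h1.trans h2)
    simpa using this
  -- membership characterization
  haveI : HasOrthogonalProjection (kerAdj T) := by
    have hcl : IsClosed ((kerAdj T : Submodule ℂ H) : Set H) :=
      ContinuousLinearMap.isClosed_ker (ContinuousLinearMap.adjoint T)
    haveI : CompleteSpace (kerAdj T) := hcl.completeSpace_coe
    infer_instance
  constructor
  · apply le_antisymm
    · rintro _ ⟨x, hx, rfl⟩
      simp [LinearMap.mem_ker, ContinuousLinearMap.sub_apply, ContinuousLinearMap.smul_apply,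
        hadj x]
    · intro u hu
      have hu' : ContinuousLinearMap.adjoint T u = (starRingEnd ℂ w) • u := by
        have := LinearMap.mem_ker.mp hu
        simp only [ContinuousLinearMap.sub_apply, ContinuousLinearMap.smul_apply,
          ContinuousLinearMap.one_apply, ContinuousLinearMap.coe_coe] at this
        exact sub_eq_zero.mp this
      set x : H := (orthogonalProjection (kerAdj T) u : H) with hxdef
      have hx : x ∈ kerAdj T := (orthogonalProjection (kerAdj T) u).2
      have hperp : u - x ∈ (kerAdj T)ᗮ := sub_starProjection_mem_orthogonal (K := kerAdj T) u
      have hinner : ∀ y ∈ kerAdj T, (inner ℂ u y : ℂ) = inner ℂ x y := by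
        intro y hy
        have h0 : (inner ℂ (u - x) y : ℂ) = 0 :=
          (Submodule.mem_orthogonal' _ _).mp hperp y hy
        rw [inner_sub_left] at h0
        linear_combination h0
      -- (T*)ⁿ u = w̄ⁿ u
      have hpow : ∀ n : ℕ, ((ContinuousLinearMap.adjoint T) ^ n) u =
          ((starRingEnd ℂ w) ^ n) • u := by
        intro n
        induction n with
        | zero => simp
        | succ n ih =>
          rw [pow_succ, ContinuousLinearMap.mul_apply, hu', map_smul, ih, smul_smul,
            ← pow_succ']
      refine ⟨x, hx, ?_⟩
      have h0 := dense_ext T hT (innerSL ℂ (ContinuousLinearMap.adjoint E x - u))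
        (fun n y hy => by
          have h1 : (inner ℂ (ContinuousLinearMap.adjoint E x) ((T ^ n) y) : ℂ) =
              w ^ n * inner ℂ x y := by
            rw [ContinuousLinearMap.adjoint_inner_left, eval_pow T w E hE n y hy,
              inner_smul_right]
          have h2 : (inner ℂ u ((T ^ n) y) : ℂ) = w ^ n * inner ℂ x y := by
            have ha : ContinuousLinearMap.adjoint (T ^ n) = (ContinuousLinearMap.adjoint T) ^ n := by
              rw [← ContinuousLinearMap.star_eq_adjoint, ← ContinuousLinearMap.star_eq_adjoint,
                star_pow]
            have h3 := ContinuousLinearMap.adjoint_inner_left (T ^ n) y u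
            rw [ha, hpow n, inner_smul_left] at h3
            rw [← h3, hinner y hy]
            simp [map_pow]
          simp only [innerSL_apply_apply, inner_sub_left, h1, h2, sub_self])
      have h1 := congrArg (fun f => f (ContinuousLinearMap.adjoint E x - u)) h0
      simp only [innerSL_apply_apply, ContinuousLinearMap.zero_apply] at h1
      have h2 : ContinuousLinearMap.adjoint E x - u = 0 := inner_self_eq_zero.mp h1
      exact sub_eq_zero.mp h2
  · refine ⟨1, one_pos, fun x hx => ?_⟩
    have h1 : (inner ℂ (ContinuousLinearMap.adjoint E x) x : ℂ) = (‖x‖ : ℂ) ^ 2 := by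
      rw [ContinuousLinearMap.adjoint_inner_left, hEid x hx, inner_self_eq_norm_sq_to_K]
      norm_cast
    have h2 : ‖x‖ ^ 2 ≤ ‖ContinuousLinearMap.adjoint E x‖ * ‖x‖ := by
      calc ‖x‖ ^ 2 = ‖(inner ℂ (ContinuousLinearMap.adjoint E x) x : ℂ)‖ := by
            rw [h1, norm_pow, Complex.norm_real, norm_norm]
        _ ≤ ‖ContinuousLinearMap.adjoint E x‖ * ‖x‖ := norm_inner_le_norm _ _
    rcases eq_or_lt_of_le (norm_nonneg x) with h | h
    · simp [← h]
    · rw [one_mul]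
      nlinarith [h2]
end
end

section
/- Let T have the wandering subspace property and w be a bounded point evaluation with evaluation operator E_w : H → ker T*. Then ker E_w equals the closure of the range of T − w. -/
open ContinuousLinearMap Submodule Filter

noncomputable section

variable {H : Type*} [NormedAddCommGroup H] [InnerProductSpace ℂ H] [CompleteSpace H]

/-- Every element of the span of the `Tⁿ (ker T*)` is a "polynomial vector". -/
lemma poly_mem (T : H →L[ℂ] H) {y : H} (hy : y ∈ ⨆ n : ℕ, (kerAdj T).map ((T ^ n : H →L[ℂ] H) : H →ₗ[ℂ] H)) :
    ∃ (k : ℕ) (x : ℕ → H), (∀ n, x n ∈ kerAdj T) ∧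
      y = ∑ n ∈ Finset.range (k + 1), (T ^ n) (x n) := by
  refine Submodule.iSup_induction (motive := fun y => ∃ (k : ℕ) (x : ℕ → H),
      (∀ n, x n ∈ kerAdj T) ∧ y = ∑ n ∈ Finset.range (k + 1), (T ^ n) (x n))
      (fun n : ℕ => (kerAdj T).map ((T ^ n : H →L[ℂ] H) : H →ₗ[ℂ] H)) hy ?_ ?_ ?_
  · rintro n y hy
    obtain ⟨z, hz, rfl⟩ := hy
    refine ⟨n, fun j => if j = n then z else 0, ?_, ?_⟩
    · intro j
      by_cases h : j = n
      · subst h; simpa using hz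
      · simp [h, (kerAdj T).zero_mem]
    · rw [Finset.sum_eq_single n]
      · simp [Module.End.pow_apply]
      · intro b _ hb; simp [hb]
      · intro h; exact absurd (Finset.self_mem_range_succ n) h
  · exact ⟨0, 0, fun n => (kerAdj T).zero_mem, by simp⟩
  · rintro y₁ y₂ ⟨k₁, x₁, h₁, rfl⟩ ⟨k₂, x₂, h₂, rfl⟩
    refine ⟨max k₁ k₂, (fun n => if n < k₁ + 1 then x₁ n else 0) +
        (fun n => if n < k₂ + 1 then x₂ n else 0), ?_, ?_⟩
    · intro n
      refine (kerAdj T).add_mem ?_ ?_ <;>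
        · dsimp only
          split <;> simp_all [(kerAdj T).zero_mem]
    · have key : ∀ (k : ℕ) (x : ℕ → H), k ≤ max k₁ k₂ →
          ∑ n ∈ Finset.range (max k₁ k₂ + 1), (T ^ n) (if n < k + 1 then x n else 0) =
          ∑ n ∈ Finset.range (k + 1), (T ^ n) (x n) := by
        intro k x hk
        have h1 : ∑ n ∈ Finset.range (k + 1), (T ^ n) (if n < k + 1 then x n else 0)
            = ∑ n ∈ Finset.range (max k₁ k₂ + 1), (T ^ n) (if n < k + 1 then x n else 0) :=
          Finset.sum_subset (Finset.range_subset_range.2 (Nat.succ_le_succ hk))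
            (fun n _ hn => by rw [if_neg (by simpa using hn)]; simp)
        rw [← h1]
        exact Finset.sum_congr rfl fun n hn => by rw [if_pos (Finset.mem_range.1 hn)]
      simp only [Pi.add_apply, map_add, Finset.sum_add_distrib]
      rw [key k₁ x₁ (le_max_left _ _), key k₂ x₂ (le_max_right _ _)]

lemma eval_comp_sub_eq_zero (T : H →L[ℂ] H) (hT : WSP T) (w : ℂ) (E : H →L[ℂ] H)
    (hE : IsEval T w E) : ∀ y : H, E ((T - w • (1 : H →L[ℂ] H)) y) = 0 := by
  have hdense : Dense ((⨆ n : ℕ, (kerAdj T).map ((T ^ n : H →L[ℂ] H) : H →ₗ[ℂ] H) : Submodule ℂ H) : Set H) :=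
    Submodule.dense_iff_topologicalClosure_eq_top.mpr hT
  have hcont : Continuous fun y => E ((T - w • (1 : H →L[ℂ] H)) y) :=
    E.continuous.comp (T - w • (1 : H →L[ℂ] H)).continuous
  have heq : (fun y => E ((T - w • (1 : H →L[ℂ] H)) y)) = fun _ => (0 : H) := by
    refine Continuous.ext_on hdense hcont continuous_const ?_
    rintro y hy
    obtain ⟨k, x, hx, rfl⟩ := poly_mem T hy
    set x' : ℕ → H := fun m => if m = 0 then 0 else x (m - 1) with hx'
    have hx'mem : ∀ m, x' m ∈ kerAdj T := by
      intro m
      by_cases h : m = 0 <;> simp [hx', h, hx, (kerAdj T).zero_mem]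
    have hTy : T (∑ n ∈ Finset.range (k + 1), (T ^ n) (x n)) =
        ∑ m ∈ Finset.range (k + 1 + 1), (T ^ m) (x' m) := by
      rw [Finset.sum_range_succ' (fun m => (T ^ m) (x' m))]
      simp only [hx', Nat.add_sub_cancel, Nat.succ_ne_zero, if_neg, pow_zero, if_pos rfl,
        map_zero, one_apply, add_zero, map_sum]
      apply Finset.sum_congr rfl
      intro n _
      simp [hx', pow_succ', ContinuousLinearMap.mul_apply]
    have hETy : E (T (∑ n ∈ Finset.range (k + 1), (T ^ n) (x n))) =
        w • ∑ n ∈ Finset.range (k + 1), w ^ n • x n := by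
      rw [hTy, hE.2 (k + 1) x' hx'mem, Finset.sum_range_succ' (fun m => w ^ m • x' m)]
      simp only [hx', Nat.add_sub_cancel, Nat.succ_ne_zero, if_neg, if_pos rfl, smul_zero,
        add_zero, Finset.smul_sum]
      apply Finset.sum_congr rfl
      intro n _
      simp [hx', smul_smul, pow_succ']
    simp only [ContinuousLinearMap.sub_apply, ContinuousLinearMap.smul_apply, one_apply,
      map_sub, map_smul, hETy, hE.2 k x hx]
    rw [ContinuousLinearMap.one_apply, hE.2 k x hx]
    simp
  intro y
  exact congrFun heq y

/-- `ker E_w = cl ran (T - w)`. -/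
theorem stmt_4 [TopologicalSpace.SeparableSpace H] (T : H →L[ℂ] H) (hT : WSP T)
    (w : ℂ) (hw : IsBPE T w) (E : H →L[ℂ] H) (hE : IsEval T w E) :
    LinearMap.ker (E : H →ₗ[ℂ] H) =
      (LinearMap.range ((T - w • (1 : H →L[ℂ] H) : H →L[ℂ] H) : H →ₗ[ℂ] H)).topologicalClosure := by
  have hzero := eval_comp_sub_eq_zero T hT w E hE
  apply le_antisymm
  · -- hard direction: ker E ⊆ closure of range
    intro y hy
    have hEy : E y = 0 := hy
    have hdense : Dense ((⨆ n : ℕ, (kerAdj T).map ((T ^ n : H →L[ℂ] H) : H →ₗ[ℂ] H) : Submodule ℂ H) : Set H) :=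
      Submodule.dense_iff_topologicalClosure_eq_top.mpr hT
    show y ∈ closure ((LinearMap.range ((T - w • (1 : H →L[ℂ] H) : H →L[ℂ] H) : H →ₗ[ℂ] H) : Submodule ℂ H) : Set H)
    rw [Metric.mem_closure_iff]
    intro ε hε
    have hEnorm : (0 : ℝ) < 1 + ‖E‖ := by positivity
    obtain ⟨p, hp, hdist⟩ := Metric.mem_closure_iff.1 (hdense.closure_eq ▸ Set.mem_univ y :
        y ∈ closure ((⨆ n : ℕ, (kerAdj T).map ((T ^ n : H →L[ℂ] H) : H →ₗ[ℂ] H) : Submodule ℂ H) : Set H))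
        (ε / (1 + ‖E‖)) (by positivity)
    obtain ⟨k, x, hx, rfl⟩ := poly_mem T hp
    set P := ∑ n ∈ Finset.range (k + 1), (T ^ n) (x n) with hP
    -- the candidate element of the range
    refine ⟨P - E P, ?_, ?_⟩
    · -- membership in range
      have : P - E P = ∑ n ∈ Finset.range (k + 1), ((T ^ n) (x n) - w ^ n • x n) := by
        rw [hE.2 k x hx, Finset.sum_sub_distrib]
      rw [this]
      apply Submodule.sum_mem
      intro n _
      have hcomm : Commute T (w • (1 : H →L[ℂ] H)) := (Commute.one_right T).smul_right w
      have hgeo := hcomm.mul_geom_sum₂ n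
      have : (T ^ n) (x n) - w ^ n • x n =
          (T - w • (1 : H →L[ℂ] H))
            ((∑ i ∈ Finset.range n, T ^ i * (w • (1 : H →L[ℂ] H)) ^ (n - 1 - i)) (x n)) := by
        rw [← ContinuousLinearMap.mul_apply, hgeo]
        have : ((w • (1 : H →L[ℂ] H)) ^ n) (x n) = w ^ n • x n := by
          rw [smul_pow, one_pow]; simp
        simp [ContinuousLinearMap.sub_apply, this]
      rw [this]
      exact ⟨_, rfl⟩
    · -- distance estimate
      have h1 : ‖E P‖ ≤ ‖E‖ * dist y P := by
        calc ‖E P‖ = ‖E (P - y)‖ := by rw [map_sub, hEy, sub_zero]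
        _ ≤ ‖E‖ * ‖P - y‖ := E.le_opNorm _
        _ = ‖E‖ * dist y P := by rw [dist_eq_norm, norm_sub_rev]
      calc dist y (P - E P) = ‖y - (P - E P)‖ := dist_eq_norm _ _
        _ = ‖(y - P) + E P‖ := by congr 1; abel
        _ ≤ ‖y - P‖ + ‖E P‖ := norm_add_le _ _
        _ ≤ dist y P + ‖E‖ * dist y P :=
            add_le_add (le_of_eq (dist_eq_norm y P).symm) h1
        _ = (1 + ‖E‖) * dist y P := by ring
        _ < (1 + ‖E‖) * (ε / (1 + ‖E‖)) := by
            exact mul_lt_mul_of_pos_left hdist hEnorm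
        _ = ε := by field_simp
  · -- easy direction: closure of range ⊆ ker E
    apply Submodule.topologicalClosure_minimal
    · rintro _ ⟨z, rfl⟩
      exact hzero z
    · exact ContinuousLinearMap.isClosed_ker E
end
end

section
/- Let T be a bounded operator with the wandering subspace property. If T is circular (for every θ ∈ ℝ there is a unitary U_θ with U_θ T = e^{iθ} T U_θ), then the set bpe(T) of bounded point evaluations is circularly symmetric: w ∈ bpe(T) implies e^{iθ}w ∈ bpe(T) for all θ ∈ ℝ. -/
open ContinuousLinearMap Submodule Filter

noncomputable section

variable {H : Type*} [NormedAddCommGroup H] [InnerProductSpace ℂ H] [CompleteSpace H]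

/-- for circular `T`, `bpe(T)` is circularly symmetric. -/
theorem stmt_7 [TopologicalSpace.SeparableSpace H] (T : H →L[ℂ] H) (hT : WSP T)
    (hcirc : ∀ θ : ℝ, ∃ U : H ≃ₗᵢ[ℂ] H,
      ∀ x : H, U (T x) = Complex.exp (θ * Complex.I) • T (U x)) :
    ∀ w : ℂ, IsBPE T w → ∀ θ : ℝ, IsBPE T (Complex.exp (θ * Complex.I) * w) := by
  rintro w ⟨c, hc, hbpe⟩ θ
  obtain ⟨U, hU⟩ := hcirc θ
  set l : ℂ := Complex.exp (θ * Complex.I) with hl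
  have hlne : l ≠ 0 := Complex.exp_ne_zero _
  -- U intertwines powers of T
  have hUpow : ∀ (n : ℕ) (v : H), U ((T ^ n) v) = l ^ n • (T ^ n) (U v) := by
    intro n
    induction n with
    | zero => intro v; simp
    | succ n ih =>
      intro v
      have h1 : (T ^ (n + 1)) v = (T ^ n) (T v) := by
        rw [pow_succ]; simp
      have h2 : (T ^ (n + 1)) (U v) = (T ^ n) (T (U v)) := by
        rw [pow_succ]; simp
      rw [h1, h2, ih (T v), hU v, map_smul, smul_smul, pow_succ, mul_comm]
  -- T (U y) = l⁻¹ • U (T y)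
  have hTU : ∀ y : H, T (U y) = l⁻¹ • U (T y) := by
    intro y
    rw [hU y, smul_smul, inv_mul_cancel₀ hlne, one_smul]
  -- U maps kerAdj T into kerAdj T
  have hker : ∀ v : H, v ∈ kerAdj T → U v ∈ kerAdj T := by
    intro v hv
    have hv0 : ContinuousLinearMap.adjoint T v = 0 := hv
    show ContinuousLinearMap.adjoint T (U v) = 0
    apply ext_inner_right ℂ
    intro z
    rw [ContinuousLinearMap.adjoint_inner_left, inner_zero_left]
    have hz : T z = l⁻¹ • U (T (U.symm z)) := by
      conv_lhs => rw [← U.apply_symm_apply z]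
      exact hTU (U.symm z)
    rw [hz, inner_smul_right, U.inner_map_map,
      ← ContinuousLinearMap.adjoint_inner_left, hv0, inner_zero_left, mul_zero]
  refine ⟨c, hc, ?_⟩
  intro k x hx
  set y : ℕ → H := fun n => l ^ n • U (x n) with hy
  have hy_mem : ∀ n, y n ∈ kerAdj T :=
    fun n => Submodule.smul_mem _ _ (hker _ (hx n))
  have h1 : ∑ n ∈ Finset.range (k + 1), (l * w) ^ n • x n =
      U.symm (∑ n ∈ Finset.range (k + 1), w ^ n • y n) := by
    rw [map_sum]
    refine Finset.sum_congr rfl fun n _ => ?_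
    rw [hy]
    simp only [smul_smul, map_smul, U.symm_apply_apply, mul_pow]
    ring_nf
  have h2 : ∑ n ∈ Finset.range (k + 1), (T ^ n) (y n) =
      U (∑ n ∈ Finset.range (k + 1), (T ^ n) (x n)) := by
    rw [map_sum]
    refine Finset.sum_congr rfl fun n _ => ?_
    rw [hy]
    simp only [map_smul, hUpow n (x n)]
  calc ‖∑ n ∈ Finset.range (k + 1), (l * w) ^ n • x n‖
      = ‖∑ n ∈ Finset.range (k + 1), w ^ n • y n‖ := by rw [h1, U.symm.norm_map]
    _ ≤ c * ‖∑ n ∈ Finset.range (k + 1), (T ^ n) (y n)‖ := hbpe k y hy_mem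
    _ = c * ‖∑ n ∈ Finset.range (k + 1), (T ^ n) (x n)‖ := by rw [h2, U.norm_map]
end
end

section
/- Let T be left-invertible with the wandering subspace property and w a bounded point evaluation with |w| < r := inf_{x ∈ ker T*, x ≠ 0} 1/r_{T'}(x). Then the adjoint evaluation operator satisfies E_w* x = Σ_{n∈ℕ} w̄^n T'^n x for all x ∈ ker T*, the series converging in H. -/
open ContinuousLinearMap Submodule Filter

noncomputable section

variable {H : Type*} [NormedAddCommGroup H] [InnerProductSpace ℂ H] [CompleteSpace H]

local notation "⟪" x ", " y "⟫" => @inner ℂ _ _ x y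

/-- auxiliary: powers of a left inverse applied to `T^k u`. -/
lemma aux_pow_apply (B T : H →L[ℂ] H) (hB1 : ∀ v, B (T v) = v) (u : H) (hu : B u = 0) :
    ∀ n k : ℕ, (B ^ n) ((T ^ k) u) = if n ≤ k then (T ^ (k - n)) u else 0 := by
  intro n
  induction n with
  | zero => intro k; simp
  | succ n ih =>
    intro k
    rw [pow_succ, ContinuousLinearMap.mul_apply]
    cases k with
    | zero =>
      simp only [pow_zero, ContinuousLinearMap.one_apply, hu, map_zero]
      simp
    | succ m =>
      rw [pow_succ' T m, ContinuousLinearMap.mul_apply, hB1, ih m]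
      simp [Nat.succ_sub_succ, Nat.succ_le_succ_iff]

/-- for `|w| < r = inf_{0 ≠ x ∈ ker T*} 1 / r_{T'}(x)` one has
`E_w* x = Σₙ w̄ⁿ T'ⁿ x` for all `x ∈ ker T*`. -/
theorem stmt_13 [TopologicalSpace.SeparableSpace H] (T T' A : H →L[ℂ] H) (hT : WSP T)
    (hA1 : A ∘L (ContinuousLinearMap.adjoint T ∘L T) = 1)
    (hA2 : (ContinuousLinearMap.adjoint T ∘L T) ∘L A = 1)
    (hT' : T' = T ∘L A) (w : ℂ) (hw : IsBPE T w)
    (hwr : ‖w‖ < sInf {s : ℝ | ∃ x ∈ kerAdj T, x ≠ 0 ∧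
      s = (Filter.atTop.limsup fun n : ℕ => ‖(T' ^ n) x‖ ^ (1 / (n : ℝ)))⁻¹})
    (E : H →L[ℂ] H) (hE : IsEval T w E) :
    ∀ x ∈ kerAdj T,
      HasSum (fun n : ℕ => (starRingEnd ℂ w) ^ n • (T' ^ n) x)
        (ContinuousLinearMap.adjoint E x) := by
  intro x hx
  have hx' : ContinuousLinearMap.adjoint T x = 0 := hx
  by_cases hx0 : x = 0
  · subst hx0; simpa using hasSum_zero
  -- adjoint facts
  have hadjT' : ContinuousLinearMap.adjoint T' =
      ContinuousLinearMap.adjoint A ∘L ContinuousLinearMap.adjoint T := by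
    rw [hT', ContinuousLinearMap.adjoint_comp]
  have hSA : ContinuousLinearMap.adjoint A ∘L (ContinuousLinearMap.adjoint T ∘L T) = 1 := by
    have h1 : ContinuousLinearMap.adjoint (ContinuousLinearMap.adjoint T ∘L T) =
        ContinuousLinearMap.adjoint T ∘L T := by
      rw [ContinuousLinearMap.adjoint_comp, ContinuousLinearMap.adjoint_adjoint]
    have h2 : ContinuousLinearMap.adjoint ((ContinuousLinearMap.adjoint T ∘L T) ∘L A) =
        ContinuousLinearMap.adjoint A ∘L
          ContinuousLinearMap.adjoint (ContinuousLinearMap.adjoint T ∘L T) :=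
      ContinuousLinearMap.adjoint_comp _ _
    rw [hA2, h1] at h2
    rw [← h2, ← ContinuousLinearMap.star_eq_adjoint, star_one]
  have hB1 : ∀ v, ContinuousLinearMap.adjoint T' (T v) = v := by
    intro v
    have : (ContinuousLinearMap.adjoint T' ∘L T) v = (1 : H →L[ℂ] H) v := by
      rw [hadjT', ContinuousLinearMap.comp_assoc, hSA]
    simpa using this
  have hTm : ∀ m : ℕ, m ≠ 0 → ((ContinuousLinearMap.adjoint T) ^ m) x = 0 := by
    intro m hm
    obtain ⟨m, rfl⟩ := Nat.exists_eq_succ_of_ne_zero hm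
    rw [pow_succ, ContinuousLinearMap.mul_apply, hx', map_zero]
  -- the limsup
  set f : ℕ → ℝ := fun n => ‖(T' ^ n) x‖ ^ (1 / (n : ℝ)) with hf
  set t : ℝ := limsup f atTop with htdef
  have hlimsup_nonneg : ∀ (g : ℕ → ℝ), (∀ n, 0 ≤ g n) → 0 ≤ limsup g atTop := by
    intro g hg
    rw [limsup_eq]
    apply Real.sInf_nonneg
    intro a ha
    obtain ⟨n, hn⟩ := ha.exists
    exact le_trans (hg n) hn
  have ht0 : 0 ≤ t := hlimsup_nonneg f fun n => Real.rpow_nonneg (norm_nonneg _) _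
  have hbdd : BddBelow {s : ℝ | ∃ x ∈ kerAdj T, x ≠ 0 ∧
      s = (Filter.atTop.limsup fun n : ℕ => ‖(T' ^ n) x‖ ^ (1 / (n : ℝ)))⁻¹} := by
    refine ⟨0, fun s hs => ?_⟩
    obtain ⟨y, _, _, rfl⟩ := hs
    exact inv_nonneg.mpr (hlimsup_nonneg _ fun n => Real.rpow_nonneg (norm_nonneg _) _)
  have hmem : t⁻¹ ∈ {s : ℝ | ∃ x ∈ kerAdj T, x ≠ 0 ∧
      s = (Filter.atTop.limsup fun n : ℕ => ‖(T' ^ n) x‖ ^ (1 / (n : ℝ)))⁻¹} :=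
    ⟨x, hx, hx0, rfl⟩
  have hwt : ‖w‖ < t⁻¹ := lt_of_lt_of_le hwr (csInf_le hbdd hmem)
  have htinv : 0 < t⁻¹ := lt_of_le_of_lt (norm_nonneg w) hwt
  have ht : 0 < t := inv_pos.mp htinv
  obtain ⟨ρ, htρ, hρ1⟩ : ∃ ρ : ℝ, t < ρ ∧ ‖w‖ * ρ < 1 := by
    by_cases hw0 : w = 0
    · exact ⟨t + 1, by linarith, by simp [hw0]⟩
    · have hwpos : 0 < ‖w‖ := norm_pos_iff.mpr hw0
      have h1 : ‖w‖ * t < 1 := by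
        calc ‖w‖ * t < t⁻¹ * t := mul_lt_mul_of_pos_right hwt ht
          _ = 1 := inv_mul_cancel₀ (ne_of_gt ht)
      have h2 : t < ‖w‖⁻¹ := by
        rw [inv_eq_one_div, lt_div_iff₀ hwpos]
        linarith [mul_comm ‖w‖ t]
      obtain ⟨ρ, hh1, hh2⟩ := exists_between h2
      refine ⟨ρ, hh1, ?_⟩
      have := mul_lt_mul_of_pos_left hh2 hwpos
      rwa [mul_inv_cancel₀ (ne_of_gt hwpos)] at this
  have hρ0 : 0 < ρ := lt_of_le_of_lt ht0 htρ
  -- eventual bound from limsup < ρ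
  have hev : ∀ᶠ n in atTop, f n < ρ := by
    have hset : {a : ℝ | ∀ᶠ n in atTop, f n ≤ a}.Nonempty := by
      by_contra h
      rw [Set.not_nonempty_iff_eq_empty] at h
      have : t = 0 := by rw [htdef, limsup_eq, h, Real.sInf_empty]
      rw [this] at ht; exact lt_irrefl 0 ht
    have hlt : sInf {a : ℝ | ∀ᶠ n in atTop, f n ≤ a} < ρ := by
      rw [← limsup_eq]; exact htρ
    obtain ⟨a, ha, haρ⟩ := exists_lt_of_csInf_lt hset hlt
    exact ha.mono fun n h => lt_of_le_of_lt h haρ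
  -- summability
  have hsum : Summable (fun n : ℕ => (starRingEnd ℂ w) ^ n • (T' ^ n) x) := by
    apply Summable.of_norm_bounded_eventually (g := fun n => (‖w‖ * ρ) ^ n)
      (summable_geometric_of_lt_one (by positivity) hρ1)
    rw [Nat.cofinite_eq_atTop]
    filter_upwards [hev, eventually_ge_atTop 1] with n hn hn1
    have hfn : 0 ≤ f n := Real.rpow_nonneg (norm_nonneg _) _
    have hbase : ‖(T' ^ n) x‖ ≤ ρ ^ n := by
      have heq : (f n) ^ n = ‖(T' ^ n) x‖ := by
        rw [hf]
        simp only [one_div]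
        exact Real.rpow_inv_natCast_pow (norm_nonneg _) (by omega)
      calc ‖(T' ^ n) x‖ = (f n) ^ n := heq.symm
        _ ≤ ρ ^ n := pow_le_pow_left₀ hfn (le_of_lt hn) n
    calc ‖(starRingEnd ℂ w) ^ n • (T' ^ n) x‖ = ‖w‖ ^ n * ‖(T' ^ n) x‖ := by
          rw [norm_smul, norm_pow, RCLike.norm_conj]
      _ ≤ ‖w‖ ^ n * ρ ^ n := mul_le_mul_of_nonneg_left hbase (pow_nonneg (norm_nonneg _) n)
      _ = (‖w‖ * ρ) ^ n := (mul_pow _ _ _).symm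
  set S : H := ∑' n : ℕ, (starRingEnd ℂ w) ^ n • (T' ^ n) x with hSdef
  have hS : HasSum (fun n : ℕ => (starRingEnd ℂ w) ^ n • (T' ^ n) x) S := hsum.hasSum
  -- inner product computation against T^k u
  have hinner : ∀ (k : ℕ) (u : H), u ∈ kerAdj T →
      ⟪(T ^ k) u, S⟫ = ⟪(T ^ k) u, ContinuousLinearMap.adjoint E x⟫ := by
    intro k u hu
    have hB2u : ContinuousLinearMap.adjoint T' u = 0 := by
      rw [hadjT']
      have : ContinuousLinearMap.adjoint T u = 0 := hu
      simp [ContinuousLinearMap.comp_apply, this]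
    -- RHS
    have hEval : E ((T ^ k) u) = w ^ k • u := by
      have h := hE.2 k (fun j => if j = k then u else 0)
        (fun j => by by_cases hj : j = k <;> simp [hj, hu, Submodule.zero_mem])
      have h1 : ∑ j ∈ Finset.range (k + 1), (T ^ j) (if j = k then u else 0) = (T ^ k) u := by
        rw [Finset.sum_eq_single_of_mem k (Finset.mem_range.mpr (Nat.lt_succ_self k))]
        · simp
        · intro j _ hj; simp [hj]
      have h2 : ∑ j ∈ Finset.range (k + 1), w ^ j • (if j = k then u else 0) = w ^ k • u := by
        rw [Finset.sum_eq_single_of_mem k (Finset.mem_range.mpr (Nat.lt_succ_self k))]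
        · simp
        · intro j _ hj; simp [hj]
      rw [h1, h2] at h
      exact h
    have hRHS : ⟪(T ^ k) u, ContinuousLinearMap.adjoint E x⟫
        = (starRingEnd ℂ w) ^ k * ⟪u, x⟫ := by
      rw [ContinuousLinearMap.adjoint_inner_right, hEval, inner_smul_left, map_pow]
    -- LHS
    have hterm : ∀ n : ℕ, ⟪(T ^ k) u, (starRingEnd ℂ w) ^ n • (T' ^ n) x⟫
        = if n = k then (starRingEnd ℂ w) ^ k * ⟪u, x⟫ else 0 := by
      intro n
      rw [inner_smul_right]
      have hpowadj : ContinuousLinearMap.adjoint (T' ^ n) =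
          (ContinuousLinearMap.adjoint T') ^ n := by
        rw [← ContinuousLinearMap.star_eq_adjoint, star_pow, ContinuousLinearMap.star_eq_adjoint]
      have h1 : ⟪(T ^ k) u, (T' ^ n) x⟫
          = ⟪((ContinuousLinearMap.adjoint T') ^ n) ((T ^ k) u), x⟫ := by
        rw [← hpowadj, ContinuousLinearMap.adjoint_inner_left]
      rw [h1, aux_pow_apply _ _ hB1 u hB2u n k]
      by_cases hnk : n = k
      · subst hnk
        simp
      · rcases lt_or_gt_of_ne hnk with h | h
        · rw [if_pos h.le, if_neg hnk]
          have hz : ⟪(T ^ (k - n)) u, x⟫ = 0 := by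
            rw [← ContinuousLinearMap.adjoint_inner_right]
            have : ContinuousLinearMap.adjoint (T ^ (k - n)) =
                (ContinuousLinearMap.adjoint T) ^ (k - n) := by
              rw [← ContinuousLinearMap.star_eq_adjoint, star_pow,
                ContinuousLinearMap.star_eq_adjoint]
            rw [this, hTm (k - n) (by omega), inner_zero_right]
          rw [hz, mul_zero]
        · rw [if_neg (by omega), if_neg hnk, inner_zero_left, mul_zero]
    have hsum2 : HasSum (fun n : ℕ => ⟪(T ^ k) u, (starRingEnd ℂ w) ^ n • (T' ^ n) x⟫)
        ⟪(T ^ k) u, S⟫ := (innerSL ℂ ((T ^ k) u)).hasSum hS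
    have hsum3 : HasSum (fun n : ℕ => if n = k then (starRingEnd ℂ w) ^ k * ⟪u, x⟫ else 0)
        ((starRingEnd ℂ w) ^ k * ⟪u, x⟫) := hasSum_ite_eq k _
    have : ⟪(T ^ k) u, S⟫ = (starRingEnd ℂ w) ^ k * ⟪u, x⟫ := by
      refine HasSum.unique ?_ hsum3
      convert hsum2 using 1
      ext n
      exact (hterm n).symm
    rw [this, hRHS]
  -- density argument
  have key : ∀ y ∈ (⨆ n : ℕ, (kerAdj T).map ((T ^ n : H →L[ℂ] H) : H →ₗ[ℂ] H)), ⟪y, S - ContinuousLinearMap.adjoint E x⟫ = 0 := by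
    intro y hy
    refine Submodule.iSup_induction (motive := fun y => ⟪y, S - ContinuousLinearMap.adjoint E x⟫ = 0)
      _ hy ?_ ?_ ?_
    · intro k y hy
      obtain ⟨u, hu, rfl⟩ := hy
      rw [inner_sub_right, ContinuousLinearMap.coe_coe, hinner k u hu, sub_self]
    · simp
    · intro a b ha hb
      rw [inner_add_left, ha, hb, add_zero]
  have horth : S - ContinuousLinearMap.adjoint E x ∈ (⨆ n : ℕ, (kerAdj T).map ((T ^ n : H →L[ℂ] H) : H →ₗ[ℂ] H))ᗮ :=
    (Submodule.mem_orthogonal _ _).mpr key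
  have hbot : (⨆ n : ℕ, (kerAdj T).map ((T ^ n : H →L[ℂ] H) : H →ₗ[ℂ] H))ᗮ = ⊥ :=
    Submodule.topologicalClosure_eq_top_iff.mp hT
  rw [hbot, Submodule.mem_bot, sub_eq_zero] at horth
  rw [← horth]
  exact hS
end
end

section
/- Let T be a left-invertible operator on a complex separable Hilbert space and x ∈ H with x ∈ ran(T − w) for all w in the open disc D(0, ‖T'‖^{-1}), where T' is the Cauchy dual. Writing x = (T − w)x(w), the function w ↦ x(w) is given by x(w) = Σ_{n∈ℕ} w^n (T'*)^{n+1} x and is analytic on D(0, ‖T'‖^{-1}). -/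
open ContinuousLinearMap Submodule Filter

noncomputable section

variable {H : Type*} [NormedAddCommGroup H] [InnerProductSpace ℂ H] [CompleteSpace H]

/-- if `x ∈ ran(T - w)` for all `|w| < ‖T'‖⁻¹`, with `x = (T - w) x(w)`, then
`x(w) = Σₙ wⁿ (T'*)ⁿ⁺¹ x` and `w ↦ x(w)` is analytic on `D(0, ‖T'‖⁻¹)`. -/
theorem stmt_19 [TopologicalSpace.SeparableSpace H] (T T' A : H →L[ℂ] H)
    (hA1 : A ∘L (ContinuousLinearMap.adjoint T ∘L T) = 1)
    (hA2 : (ContinuousLinearMap.adjoint T ∘L T) ∘L A = 1)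
    (hT' : T' = T ∘L A)
    (x : H) (xf : ℂ → H)
    (hx : ∀ w : ℂ, ‖w‖ < ‖T'‖⁻¹ → (T - w • (1 : H →L[ℂ] H)) (xf w) = x) :
    (∀ w : ℂ, ‖w‖ < ‖T'‖⁻¹ →
      HasSum (fun n : ℕ => w ^ n • ((ContinuousLinearMap.adjoint T') ^ (n + 1)) x) (xf w)) ∧
    AnalyticOnNhd ℂ xf (Metric.ball 0 ‖T'‖⁻¹) := by
  set S := ContinuousLinearMap.adjoint T' with hSdef
  -- S ∘ T = 1
  have hST : S ∘L T = 1 := by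
    set B := ContinuousLinearMap.adjoint T ∘L T with hB
    have hBsa : ContinuousLinearMap.adjoint B = B := by
      rw [hB, adjoint_comp, adjoint_adjoint]
    have h1 : ContinuousLinearMap.adjoint A ∘L B = 1 := by
      have := congrArg ContinuousLinearMap.adjoint hA2
      rw [adjoint_comp, hBsa] at this
      rw [this]; exact adjoint_id
    have hAsa : ContinuousLinearMap.adjoint A = A := by
      have h2 : ContinuousLinearMap.adjoint A * (B * A) =
          (ContinuousLinearMap.adjoint A * B) * A := (mul_assoc _ _ _).symm
      rw [show B * A = B ∘L A from rfl, hA2,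
        show ContinuousLinearMap.adjoint A * B = ContinuousLinearMap.adjoint A ∘L B from rfl, h1,
        mul_one, one_mul] at h2
      exact h2
    rw [hSdef, hT', adjoint_comp, hAsa, comp_assoc, ← hB, ← hAsa]
    exact h1
  have hSpow : ∀ (n : ℕ) (y : H), ‖(S ^ n) y‖ ≤ ‖S‖ ^ n * ‖y‖ := by
    intro n
    induction n with
    | zero => intro y; simp
    | succ n ih =>
      intro y
      rw [pow_succ, ContinuousLinearMap.mul_apply]
      calc ‖(S ^ n) (S y)‖ ≤ ‖S‖ ^ n * ‖S y‖ := ih (S y)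
        _ ≤ ‖S‖ ^ n * (‖S‖ * ‖y‖) :=
          mul_le_mul_of_nonneg_left (le_opNorm S y) (by positivity)
        _ = ‖S‖ ^ (n + 1) * ‖y‖ := by ring
  have hSTy : ∀ y, S (T y) = y := fun y => by
    have := congrArg (fun (L : H →L[ℂ] H) => L y) hST
    simpa using this
  have hnormS : ‖S‖ = ‖T'‖ :=
    LinearIsometryEquiv.norm_map (ContinuousLinearMap.adjoint
      : (H →L[ℂ] H) ≃ₗᵢ⋆[ℂ] (H →L[ℂ] H)) T'
  -- the key HasSum statement
  have key : ∀ w : ℂ, ‖w‖ < ‖T'‖⁻¹ →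
      HasSum (fun n : ℕ => w ^ n • (S ^ (n + 1)) x) (xf w) := by
    intro w hw
    have hTnorm : 0 < ‖T'‖ := by
      by_contra h
      push_neg at h
      have h0 : ‖T'‖ = 0 := le_antisymm h (norm_nonneg _)
      rw [h0, inv_zero] at hw
      exact absurd hw (not_lt.2 (norm_nonneg w))
    have hwS : ‖w‖ * ‖S‖ < 1 := by
      rw [hnormS]
      calc ‖w‖ * ‖T'‖ < ‖T'‖⁻¹ * ‖T'‖ := by
            exact mul_lt_mul_of_pos_right hw hTnorm
        _ = 1 := inv_mul_cancel₀ (ne_of_gt hTnorm)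
    -- (1 - w S)(xf w) = S x
    have hu : xf w - w • S (xf w) = S x := by
      have h := congrArg S (hx w hw)
      simp only [ContinuousLinearMap.sub_apply, ContinuousLinearMap.smul_apply,
        ContinuousLinearMap.one_apply, map_sub, map_smul] at h
      rw [hSTy] at h
      exact h
    -- summability
    have hsum : Summable (fun n : ℕ => w ^ n • (S ^ (n + 1)) x) := by
      apply Summable.of_norm
      apply Summable.of_nonneg_of_le (fun n => norm_nonneg _)
        (fun n => ?_) (((summable_geometric_of_lt_one (by positivity) hwS)).mul_right (‖S‖ * ‖x‖))
      calc ‖w ^ n • (S ^ (n + 1)) x‖ = ‖w‖ ^ n * ‖(S ^ (n + 1)) x‖ := by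
            rw [norm_smul, norm_pow]
        _ ≤ ‖w‖ ^ n * (‖S‖ ^ (n + 1) * ‖x‖) :=
            mul_le_mul_of_nonneg_left (hSpow (n + 1) x) (by positivity)
        _ = (‖w‖ * ‖S‖) ^ n * (‖S‖ * ‖x‖) := by ring
    -- telescoping: partial sums tend to xf w
    have hterm : ∀ n : ℕ, w ^ n • (S ^ (n + 1)) x =
        w ^ n • (S ^ n) (xf w) - w ^ (n + 1) • (S ^ (n + 1)) (xf w) := by
      intro n
      have h1 : (S ^ (n + 1)) x = (S ^ n) (S x) := by
        rw [pow_succ, ContinuousLinearMap.mul_apply]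
      rw [h1, ← hu, map_sub, map_smul, smul_sub, smul_smul, ← pow_succ]
      congr 1
    have hpartial : ∀ N : ℕ, ∑ n ∈ Finset.range N, w ^ n • (S ^ (n + 1)) x
        = xf w - w ^ N • (S ^ N) (xf w) := by
      intro N
      have h2 := Finset.sum_range_sub' (fun n => w ^ n • (S ^ n) (xf w)) N
      simp only [pow_zero, one_smul, pow_zero, ContinuousLinearMap.one_apply] at h2
      rw [← h2]
      exact Finset.sum_congr rfl fun n _ => hterm n
    have htend : Tendsto (fun N : ℕ => w ^ N • (S ^ N) (xf w)) atTop (nhds 0) := by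
      have hlim : Tendsto (fun N : ℕ => (‖w‖ * ‖S‖) ^ N * ‖xf w‖) atTop (nhds 0) := by
        simpa using (tendsto_pow_atTop_nhds_zero_of_lt_one (by positivity) hwS).mul_const ‖xf w‖
      apply squeeze_zero_norm (fun N => ?_) hlim
      calc ‖w ^ N • (S ^ N) (xf w)‖ = ‖w‖ ^ N * ‖(S ^ N) (xf w)‖ := by
            rw [norm_smul, norm_pow]
        _ ≤ ‖w‖ ^ N * (‖S‖ ^ N * ‖xf w‖) :=
            mul_le_mul_of_nonneg_left (hSpow N (xf w)) (by positivity)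
        _ = (‖w‖ * ‖S‖) ^ N * ‖xf w‖ := by ring
    have htend2 : Tendsto (fun N : ℕ => ∑ n ∈ Finset.range N, w ^ n • (S ^ (n + 1)) x)
        atTop (nhds (xf w)) := by
      simp only [hpartial]
      simpa using (tendsto_const_nhds.sub htend)
    have hhs := hsum.hasSum
    have heq := tendsto_nhds_unique hhs.tendsto_sum_nat htend2
    rwa [heq] at hhs
  refine ⟨key, ?_⟩
  -- analyticity
  by_cases hTnorm : ‖T'‖ = 0
  · intro z hz
    rw [hTnorm, inv_zero] at hz
    simp at hz
  have hTpos : 0 < ‖T'‖ := lt_of_le_of_ne (norm_nonneg _) (Ne.symm hTnorm)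
  set p : FormalMultilinearSeries ℂ ℂ H :=
    fun n => ContinuousMultilinearMap.mkPiRing ℂ (Fin n) ((S ^ (n + 1)) x) with hp
  have hpn : ∀ n, ‖p n‖ ≤ ‖S‖ ^ (n + 1) * ‖x‖ := by
    intro n
    rw [hp]
    rw [ContinuousMultilinearMap.norm_mkPiRing]
    exact hSpow (n + 1) x
  have hrad : ENNReal.ofReal ‖T'‖⁻¹ ≤ p.radius := by
    apply ENNReal.le_of_forall_nnreal_lt
    intro r hr
    have hr' : (r : ℝ) < ‖T'‖⁻¹ := by
      have h := hr
      rw [← ENNReal.ofReal_coe_nnreal] at h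
      exact (ENNReal.ofReal_lt_ofReal_iff (by positivity)).1 h
    apply p.le_radius_of_bound (‖S‖ * ‖x‖)
    intro n
    have h1 : ‖S‖ * (r : ℝ) < 1 := by
      rw [hnormS]
      calc ‖T'‖ * (r : ℝ) < ‖T'‖ * ‖T'‖⁻¹ := by
            exact mul_lt_mul_of_pos_left hr' hTpos
        _ = 1 := mul_inv_cancel₀ (ne_of_gt hTpos)
    calc ‖p n‖ * (r : ℝ) ^ n ≤ (‖S‖ ^ (n + 1) * ‖x‖) * (r : ℝ) ^ n :=
          mul_le_mul_of_nonneg_right (hpn n) (by positivity)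
      _ = (‖S‖ * ‖x‖) * (‖S‖ * (r : ℝ)) ^ n := by ring
      _ ≤ (‖S‖ * ‖x‖) * 1 := by
          apply mul_le_mul_of_nonneg_left _ (by positivity)
          exact pow_le_one₀ (by positivity) (le_of_lt h1)
      _ = ‖S‖ * ‖x‖ := mul_one _
  have hball : HasFPowerSeriesOnBall xf p 0 (ENNReal.ofReal ‖T'‖⁻¹) :=
    { r_le := hrad
      r_pos := by
        rw [ENNReal.ofReal_pos]
        positivity
      hasSum := by
        intro y hy
        rw [Metric.emetric_ball] at hy
        rw [Metric.mem_ball, dist_zero_right] at hy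
        have := key y hy
        simp only [hp, ContinuousMultilinearMap.mkPiRing_apply, Finset.prod_const,
          Finset.card_univ, Fintype.card_fin, zero_add]
        exact this }
  have := hball.analyticOnNhd
  rwa [Metric.emetric_ball] at this
end
end
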